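/- arXiv:2410.12712 — 2 statements merged into one kernel-verified Lean document; each statement's English description precedes it below -/
import Mathlib

section
/- Let d, s, T ≥ 1 be natural numbers and π a permutation of Fin T. Let P_π^{ds} be the permutation operator on (ℂ^{d·s})^{⊗T}, realized as the matrix indexed by functions F, G : Fin T → Fin d × Fin s whose (F, G) entry is 1 if F = G ∘ π⁻¹ and 0 otherwise. Define the partial trace over all s-dimensional factors as the matrix Q indexed by f, g : Fin T → Fin d with Q(f, g) = Σ_{h : Fin T → Fin s} P_π^{ds}(l ↦ (f l, h l), l ↦ (g l, h l)). Then Q = s^{c(π)} • P_π^{d}, where P_π^{d} is the permutation operator on (ℂ^d)^{⊗T} and c(π) is the number of cycles of π counting fixed points. -/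
open Matrix

/-- The number of cycles of a permutation of `Fin T`, counting fixed points as cycles of
length one; equivalently `T − (π.cycleType.sum − π.cycleType.card)`. -/
def cycleCount {T : ℕ} (π : Equiv.Perm (Fin T)) : ℕ :=
  T - (π.cycleType.sum - π.cycleType.card)

/-- The permutation operator `P_π` on `(ℂ^d)^{⊗T}`: its `(f, g)` entry is `1` if
`f = g ∘ π⁻¹` and `0` otherwise. -/
def permOp (d T : ℕ) (π : Equiv.Perm (Fin T)) :
    Matrix (Fin T → Fin d) (Fin T → Fin d) ℂ :=
  fun f g => if f = g ∘ ⇑π⁻¹ then 1 else 0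

lemma inv_zpow_apply {α : Type*} (π : Equiv.Perm α) {s : ℕ} {h : α → Fin s}
    (hh : ∀ x, h (π x) = h x) : ∀ (n : ℤ) (x : α), h ((π ^ n) x) = h x := by
  have hinv : ∀ x, h (π⁻¹ x) = h x := fun x => by
    have e : π (π⁻¹ x) = x := Equiv.apply_symm_apply π x
    conv_rhs => rw [← e, hh]
  have hn : ∀ (n : ℕ) (x : α), h ((π ^ n) x) = h x := by
    intro n
    induction n with
    | zero => simp
    | succ k ih => intro x; rw [pow_succ, Equiv.Perm.mul_apply, ih, hh]
  intro n x
  cases n with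
  | ofNat m => exact_mod_cast hn m x
  | negSucc m =>
    rw [zpow_negSucc]
    have : ∀ (m : ℕ) (x : α), h ((π ^ m)⁻¹ x) = h x := by
      intro m
      induction m with
      | zero => simp
      | succ k ih =>
        intro x
        rw [pow_succ, _root_.mul_inv_rev, Equiv.Perm.mul_apply, hinv, ih]
    exact this (m+1) x

noncomputable def cyclePt {T : ℕ} {π : Equiv.Perm (Fin T)} (c : π.cycleFactorsFinset) :
    Fin T :=
  c.1.support.min' (Finset.card_pos.mp (by
    have := (Equiv.Perm.mem_cycleFactorsFinset_iff.mp c.2).1.two_le_card_support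
    omega))

lemma cyclePt_mem {T : ℕ} {π : Equiv.Perm (Fin T)} (c : π.cycleFactorsFinset) :
    cyclePt c ∈ c.1.support := Finset.min'_mem _ _

noncomputable def invariantEquiv (s T : ℕ) (π : Equiv.Perm (Fin T)) :
    {h : Fin T → Fin s // ∀ x, h (π x) = h x} ≃
      (({x : Fin T // π x = x} ⊕ π.cycleFactorsFinset) → Fin s) where
  toFun h i := i.elim (fun x => h.1 x.1) (fun c => h.1 (cyclePt c))
  invFun v := ⟨fun x => if hx : π x = x then v (Sum.inl ⟨x, hx⟩)
      else v (Sum.inr ⟨π.cycleOf x,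
        Equiv.Perm.cycleOf_mem_cycleFactorsFinset_iff.mpr (Equiv.Perm.mem_support.mpr hx)⟩),
    by
      intro x
      by_cases hx : π x = x
      · have hπx : π (π x) = π x := by rw [hx]; exact hx
        simp only [dif_pos hx, dif_pos hπx]
        exact congrArg v (congrArg Sum.inl (Subtype.ext hx))
      · have hπx : ¬ π (π x) = π x := fun e => hx (π.injective e)
        simp only [dif_neg hx, dif_neg hπx]
        exact congrArg v (congrArg Sum.inr
          (Subtype.ext (Equiv.Perm.cycleOf_self_apply π x)))⟩
  left_inv h := by
    apply Subtype.ext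
    funext x
    by_cases hx : π x = x
    · simp only [dif_pos hx, Sum.elim_inl]
    · simp only [dif_neg hx, Sum.elim_inr]
      set c : π.cycleFactorsFinset := ⟨π.cycleOf x,
        Equiv.Perm.cycleOf_mem_cycleFactorsFinset_iff.mpr (Equiv.Perm.mem_support.mpr hx)⟩
      have hmem : cyclePt c ∈ (c.1).support := cyclePt_mem c
      have hsc : π.SameCycle x (cyclePt c) :=
        ((Equiv.Perm.mem_support_cycleOf_iff).mp hmem).1
      obtain ⟨i, hi⟩ := hsc
      rw [← hi]
      exact inv_zpow_apply π h.2 i x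
  right_inv v := by
    funext i
    cases i with
    | inl x => simp only [Sum.elim_inl, dif_pos x.2]
    | inr c =>
      simp only [Sum.elim_inr]
      have hmem : cyclePt c ∈ (c.1).support := cyclePt_mem c
      have hsupp : cyclePt c ∈ π.support :=
        Equiv.Perm.mem_cycleFactorsFinset_support_le c.2 hmem
      have hne : ¬ π (cyclePt c) = cyclePt c := Equiv.Perm.mem_support.mp hsupp
      rw [dif_neg hne]
      exact congrArg v (congrArg Sum.inr
        (Subtype.ext (Equiv.Perm.cycle_is_cycleOf hmem c.2).symm))

lemma card_invariant (s T : ℕ) (π : Equiv.Perm (Fin T)) :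
    Fintype.card {h : Fin T → Fin s // ∀ x, h (π x) = h x} = s ^ cycleCount π := by
  classical
  rw [Fintype.card_congr (invariantEquiv s T π), Fintype.card_fun, Fintype.card_fin,
    Fintype.card_sum]
  congr 1
  have h1 : Fintype.card {x : Fin T // π x = x} + π.support.card = T := by
    rw [Fintype.card_subtype]
    have hsup : π.support = Finset.filter (fun a => ¬ π a = a) Finset.univ := rfl
    rw [hsup]
    simpa using Finset.card_filter_add_card_filter_not
      (s := (Finset.univ : Finset (Fin T))) (p := fun x => π x = x)
  have h2 : π.cycleType.sum = π.support.card := Equiv.Perm.sum_cycleType π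
  have h3 : π.cycleType.card = π.cycleFactorsFinset.card := by
    rw [Equiv.Perm.cycleType]
    simp
  have h4 : π.cycleType.card ≤ π.cycleType.sum := by
    have := Multiset.card_nsmul_le_sum (s := π.cycleType) (a := 1)
      (fun x hx => le_trans (by norm_num) (Equiv.Perm.two_le_of_mem_cycleType hx))
    simpa using this
  have h5 : π.support.card ≤ T := by
    have := Finset.card_le_univ π.support
    simpa using this
  rw [Fintype.card_coe]
  unfold cycleCount
  omega

/-- Tracing out all `s`-dimensional factors of the permutation operator on
`(ℂ^{d·s})^{⊗T}` yields `s^{c(π)}` times the permutation operator on `(ℂ^d)^{⊗T}`,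
where `c(π)` is the number of cycles of `π` counting fixed points. -/
theorem stmt_17 (d s T : ℕ) (hd : 1 ≤ d) (hs : 1 ≤ s) (hT : 1 ≤ T)
    (π : Equiv.Perm (Fin T))
    (Q : Matrix (Fin T → Fin d) (Fin T → Fin d) ℂ)
    (hQ : ∀ f g, Q f g = ∑ h : Fin T → Fin s,
      (if (fun l => (f l, h l) : Fin T → Fin d × Fin s)
          = (fun l => (g l, h l) : Fin T → Fin d × Fin s) ∘ ⇑π⁻¹ then (1 : ℂ) else 0)) :
    Q = ((s : ℂ) ^ cycleCount π) • permOp d T π := by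
  classical
  ext f g
  rw [hQ]
  have key : ∀ h : Fin T → Fin s,
      ((fun l => (f l, h l) : Fin T → Fin d × Fin s)
        = (fun l => (g l, h l) : Fin T → Fin d × Fin s) ∘ ⇑π⁻¹)
      ↔ (f = g ∘ ⇑π⁻¹ ∧ ∀ x, h (π x) = h x) := by
    intro h
    constructor
    · intro he
      have he' : ∀ l, (f l, h l) = (g (π⁻¹ l), h (π⁻¹ l)) := fun l => congrFun he l
      constructor
      · funext l; exact (Prod.mk.injEq _ _ _ _ ▸ he' l).1
      · intro x
        have := (Prod.mk.injEq _ _ _ _ ▸ he' (π x)).2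
        simpa using this
    · rintro ⟨hf, hh⟩
      funext l
      have h1 : f l = g (π⁻¹ l) := congrFun hf l
      have h2 : h l = h (π⁻¹ l) := by
        simpa using hh (π⁻¹ l)
      simp only [Function.comp_apply]
      exact Prod.ext h1 h2
  simp only [Matrix.smul_apply, permOp, smul_eq_mul]
  by_cases hfg : f = g ∘ ⇑π⁻¹
  · rw [if_pos hfg, mul_one]
    have : ∀ h : Fin T → Fin s,
        (if (fun l => (f l, h l) : Fin T → Fin d × Fin s)
            = (fun l => (g l, h l) : Fin T → Fin d × Fin s) ∘ ⇑π⁻¹ then (1 : ℂ) else 0)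
        = if (∀ x, h (π x) = h x) then (1 : ℂ) else 0 := by
      intro h
      by_cases hc : ∀ x, h (π x) = h x
      · rw [if_pos ((key h).mpr ⟨hfg, hc⟩), if_pos hc]
      · rw [if_neg (fun he => hc ((key h).mp he).2), if_neg hc]
    rw [Finset.sum_congr rfl (fun h _ => this h), Finset.sum_boole]
    rw [← Fintype.card_subtype, card_invariant s T π]
    push_cast
    ring
  · rw [if_neg hfg, mul_zero]
    apply Finset.sum_eq_zero
    intro h _
    rw [if_neg]
    intro he
    exact hfg ((key h).mp he).1
end

section
/- Let d, s, T ≥ 1 be natural numbers, let μ be the Haar probability measure on the unitary group of (Fin d × Fin s)-indexed complex matrices, and for a unitary U let ψ_U be the random induced state with entries ψ_U(i, j) = Σ_{k : Fin s} (U e₀)(i, k)·conj((U e₀)(j, k)). Then ∫ (ψ_U)^{⊗T} dμ(U) = (∏_{i=0}^{T−1} (d·s + i))⁻¹ · Σ_{π ∈ Perm(Fin T)} s^{c(π)} • P_π, where (ψ)^{⊗T} is the matrix indexed by f, g : Fin T → Fin d with entries ∏_l ψ(f l)(g l), and the integral is the entrywise (Bochner) integral of matrix-valued functions. -/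
open MeasureTheory Matrix Finset

/-- Borel measurable-space structure on the unitary group (as a subspace of matrices). -/
noncomputable instance unitaryGroupMeasurableSpace (n : Type*) [Fintype n] [DecidableEq n] :
    MeasurableSpace (Matrix.unitaryGroup n ℂ) := borel _

instance unitaryGroupBorelSpace (n : Type*) [Fintype n] [DecidableEq n] :
    BorelSpace (Matrix.unitaryGroup n ℂ) := ⟨rfl⟩

set_option linter.unusedSectionVars false
set_option maxHeartbeats 1000000

namespace StmtAux
variable {ι : Type*} [Fintype ι] [DecidableEq ι]

def phi (m m' : ι → ℕ) (w : ι → ℂ) : ℂ :=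
  ∏ p, (w p) ^ (m p) * ((starRingEnd ℂ) (w p)) ^ (m' p)

def colV (p₀ : ι) (U : Matrix.unitaryGroup ι ℂ) : ι → ℂ :=
  fun p => (U : Matrix ι ι ℂ) p p₀

noncomputable def PM (μ : Measure (Matrix.unitaryGroup ι ℂ)) (p₀ : ι) (m m' : ι → ℕ) : ℂ :=
  ∫ U, phi m m' (colV p₀ U) ∂μ

lemma col_unit (p₀ : ι) (U : Matrix.unitaryGroup ι ℂ) :
    ∑ r, colV p₀ U r * (starRingEnd ℂ) (colV p₀ U r) = 1 := by
  have h : (star (U : Matrix ι ι ℂ) * (U : Matrix ι ι ℂ)) p₀ p₀ = (1 : Matrix ι ι ℂ) p₀ p₀ := by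
    rw [Unitary.coe_star_mul_self]
  rw [Matrix.mul_apply] at h
  simp only [Matrix.one_apply_eq] at h
  rw [← h]
  apply Finset.sum_congr rfl
  intro r _
  simp [Matrix.star_apply, colV, mul_comm]

lemma norm_colV_le (p₀ : ι) (U : Matrix.unitaryGroup ι ℂ) (p : ι) : ‖colV p₀ U p‖ ≤ 1 := by
  have h := col_unit p₀ U
  have h2 : ∀ r, colV p₀ U r * (starRingEnd ℂ) (colV p₀ U r) = ((‖colV p₀ U r‖ ^ 2 : ℝ) : ℂ) := by
    intro r
    rw [Complex.mul_conj']
    norm_cast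
  simp_rw [h2] at h
  have h3 : ∑ r, ‖colV p₀ U r‖ ^ 2 = 1 := by exact_mod_cast h
  have h4 : ‖colV p₀ U p‖ ^ 2 ≤ 1 := by
    rw [← h3]
    exact Finset.single_le_sum (f := fun r => ‖colV p₀ U r‖ ^ 2) (fun r _ => sq_nonneg _) (Finset.mem_univ p)
  nlinarith [norm_nonneg (colV p₀ U p)]

lemma continuous_colV (p₀ : ι) : Continuous (colV p₀ : Matrix.unitaryGroup ι ℂ → ι → ℂ) := by
  apply continuous_pi
  intro p
  exact Continuous.matrix_elem (by exact continuous_subtype_val) p p₀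

lemma norm_phi_le (m m' : ι → ℕ) (w : ι → ℂ) (hw : ∀ p, ‖w p‖ ≤ 1) : ‖phi m m' w‖ ≤ 1 := by
  rw [phi]
  refine le_trans (norm_prod_le _ _) (Finset.prod_le_one (fun p _ => norm_nonneg _) ?_)
  intro p _
  rw [norm_mul, norm_pow, norm_pow, RCLike.norm_conj]
  exact mul_le_one₀ (pow_le_one₀ (norm_nonneg _) (hw p)) (by positivity)
    (pow_le_one₀ (norm_nonneg _) (hw p))

lemma integrable_phi (μ : Measure (Matrix.unitaryGroup ι ℂ)) [IsProbabilityMeasure μ]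
    (p₀ : ι) (m m' : ι → ℕ) : Integrable (fun U => phi m m' (colV p₀ U)) μ := by
  have hc : Continuous (fun U => phi m m' (colV p₀ U)) := by
    unfold phi
    apply continuous_finset_prod
    intro p _
    exact (((continuous_apply p).comp (continuous_colV p₀)).pow _).mul
      ((Complex.continuous_conj.comp ((continuous_apply p).comp (continuous_colV p₀))).pow _)
  refine (integrable_const (1 : ℝ)).mono' hc.aestronglyMeasurable ?_
  filter_upwards with U
  exact norm_phi_le m m' _ (norm_colV_le p₀ U)

lemma phi_invariance (μ : Measure (Matrix.unitaryGroup ι ℂ)) [IsProbabilityMeasure μ]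
    [μ.IsMulLeftInvariant] (p₀ : ι) (m m' : ι → ℕ)
    (W : Matrix ι ι ℂ) (hW : W ∈ Matrix.unitaryGroup ι ℂ) :
    ∫ U, phi m m' (W.mulVec (colV p₀ U)) ∂μ = PM μ p₀ m m' := by
  have h1 : ∀ U : Matrix.unitaryGroup ι ℂ,
      W.mulVec (colV p₀ U) = colV p₀ ((⟨W, hW⟩ : Matrix.unitaryGroup ι ℂ) * U) := by
    intro U
    funext r
    simp [colV, Matrix.mulVec, dotProduct, Matrix.mul_apply]
  simp_rw [h1]
  exact integral_mul_left_eq_self (fun V => phi m m' (colV p₀ V)) _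

lemma PM_zero (μ : Measure (Matrix.unitaryGroup ι ℂ)) [IsProbabilityMeasure μ] (p₀ : ι) :
    PM μ p₀ (fun _ => 0) (fun _ => 0) = 1 := by
  have : ∀ U : Matrix.unitaryGroup ι ℂ, phi (fun _ => 0) (fun _ => 0) (colV p₀ U) = 1 := by
    intro U; simp [phi]
  rw [PM]
  simp_rw [this]
  simp


lemma diag_unitary (α : ι → ℂ) (hα : ∀ r, α r * (starRingEnd ℂ) (α r) = 1) :
    Matrix.diagonal α ∈ Matrix.unitaryGroup ι ℂ := by
  rw [Matrix.mem_unitaryGroup_iff]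
  have : star (Matrix.diagonal α) = Matrix.diagonal (star α) := by
    simp [Matrix.star_eq_conjTranspose, Matrix.diagonal_conjTranspose]
  rw [this, Matrix.diagonal_mul_diagonal]
  convert Matrix.diagonal_one using 2
  funext r
  simpa using hα r

lemma diag_mulVec (α : ι → ℂ) (x : ι → ℂ) :
    (Matrix.diagonal α).mulVec x = fun r => α r * x r := by
  funext r
  simp [Matrix.mulVec_diagonal]

def rotM (p q : ι) (c s : ℝ) : Matrix ι ι ℂ :=
  fun r t =>
    if r = p ∧ t = p then (c : ℂ) else if r = p ∧ t = q then (s : ℂ)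
    else if r = q ∧ t = p then (-s : ℂ) else if r = q ∧ t = q then (c : ℂ)
    else if r = t then 1 else 0

lemma sum_two (p q : ι) (hpq : p ≠ q) (h : ι → ℂ) (hh : ∀ u, u ≠ p → u ≠ q → h u = 0) :
    ∑ u, h u = h p + h q := by
  rw [← Finset.sum_pair hpq]
  symm
  apply Finset.sum_subset (Finset.subset_univ _)
  intro u _ hu
  simp only [Finset.mem_insert, Finset.mem_singleton, not_or] at hu
  exact hh u hu.1 hu.2

lemma rot_entry_zero (p q : ι) (c s : ℝ) (r u : ι) (hu1 : u ≠ p) (hu2 : u ≠ q) (hu3 : r ≠ u) :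
    rotM p q c s r u = 0 := by
  simp [rotM, hu1, hu2, hu3]

lemma rot_zero_row (p q : ι) (c s : ℝ) (r u : ι) (hr1 : r ≠ p) (hr2 : r ≠ q) (hru : r ≠ u) :
    rotM p q c s r u = 0 := by
  simp [rotM, hr1, hr2, hru]

lemma star_rot (p q : ι) (c s : ℝ) (u t : ι) :
    (star (rotM p q c s)) u t = (starRingEnd ℂ) (rotM p q c s t u) := by
  simp [Matrix.star_apply]

lemma rot_unitary (p q : ι) (hpq : p ≠ q) (c s : ℝ) (hcs : c ^ 2 + s ^ 2 = 1) :
    rotM p q c s ∈ Matrix.unitaryGroup ι ℂ := by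
  have hqp : q ≠ p := hpq.symm
  have hone : ((c : ℂ) ^ 2 + (s : ℂ) ^ 2) = 1 := by exact_mod_cast hcs
  have epp : rotM p q c s p p = (c : ℂ) := by simp [rotM]
  have epq : rotM p q c s p q = (s : ℂ) := by simp [rotM, hpq, hqp]
  have eqp : rotM p q c s q p = (-s : ℂ) := by simp [rotM, hpq, hqp]
  have eqq : rotM p q c s q q = (c : ℂ) := by simp [rotM, hpq, hqp]
  have erow : ∀ r u, r ≠ p → r ≠ q → rotM p q c s r u = if r = u then 1 else 0 := by
    intro r u h1 h2
    simp [rotM, h1, h2]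
  rw [Matrix.mem_unitaryGroup_iff]
  ext r t
  rw [Matrix.mul_apply]
  simp only [star_rot]
  by_cases hr1 : r = p
  · have hsum : ∀ u, u ≠ p → u ≠ q → rotM p q c s r u * (starRingEnd ℂ) (rotM p q c s t u) = 0 := by
      intro u h1 h2
      rw [hr1, rot_entry_zero p q c s p u h1 h2 (fun h => h1 h.symm), zero_mul]
    rw [sum_two p q hpq _ hsum, hr1, epp, epq]
    by_cases ht1 : t = p
    · rw [ht1, epp, epq, Matrix.one_apply_eq, Complex.conj_ofReal, Complex.conj_ofReal]
      linear_combination hone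
    · by_cases ht2 : t = q
      · rw [ht2, eqp, eqq, map_neg, Complex.conj_ofReal, Complex.conj_ofReal,
          Matrix.one_apply_ne hpq]
        push_cast
        ring
      · rw [erow t p ht1 ht2, erow t q ht1 ht2, if_neg (fun h => ht1 h), if_neg (fun h => ht2 h),
          map_zero, mul_zero, mul_zero, add_zero, Matrix.one_apply_ne (fun h => ht1 h.symm)]
  · by_cases hr2 : r = q
    · have hsum : ∀ u, u ≠ p → u ≠ q → rotM p q c s r u * (starRingEnd ℂ) (rotM p q c s t u) = 0 := by
        intro u h1 h2
        rw [hr2, rot_entry_zero p q c s q u h1 h2 (fun h => h2 h.symm), zero_mul]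
      rw [sum_two p q hpq _ hsum, hr2, eqp, eqq]
      by_cases ht1 : t = p
      · rw [ht1, epp, epq, Complex.conj_ofReal, Complex.conj_ofReal,
          Matrix.one_apply_ne hqp]
        push_cast
        ring
      · by_cases ht2 : t = q
        · rw [ht2, eqp, eqq, Matrix.one_apply_eq, map_neg, Complex.conj_ofReal,
            Complex.conj_ofReal]
          push_cast
          ring_nf
          linear_combination hone
        · rw [erow t p ht1 ht2, erow t q ht1 ht2, if_neg (fun h => ht1 h), if_neg (fun h => ht2 h),
            map_zero, mul_zero, mul_zero, add_zero, Matrix.one_apply_ne (fun h => ht2 h.symm)]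
    · rw [Finset.sum_eq_single r]
      · rw [erow r r hr1 hr2, if_pos rfl, one_mul]
        by_cases ht : t = r
        · rw [ht, erow r r hr1 hr2, if_pos rfl, Matrix.one_apply_eq]
          simp
        · rw [rot_entry_zero p q c s t r hr1 hr2 ht, map_zero,
            Matrix.one_apply_ne (fun h => ht h.symm)]
      · intro u _ hu
        rw [rot_zero_row p q c s r u hr1 hr2 (fun h => hu h.symm), zero_mul]
      · simp

lemma rot_mulVec (p q : ι) (hpq : p ≠ q) (c s : ℝ) (x : ι → ℂ) :
    (rotM p q c s).mulVec x = fun r =>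
      if r = p then (c : ℂ) * x p + (s : ℂ) * x q
      else if r = q then (-s : ℂ) * x p + (c : ℂ) * x q else x r := by
  funext r
  rw [Matrix.mulVec, dotProduct]
  by_cases h1 : r = p
  · rw [if_pos h1, sum_two p q hpq]
    · rw [h1]; simp [rotM, hpq, hpq.symm]
    · intro u hup huq
      rw [h1, rot_entry_zero p q c s p u hup huq (fun h => hup h.symm), zero_mul]
  · rw [if_neg h1]
    by_cases h2 : r = q
    · rw [if_pos h2, sum_two p q hpq]
      · rw [h2]; simp [rotM, hpq, hpq.symm]
      · intro u hup huq
        rw [h2, rot_entry_zero p q c s q u hup huq (fun h => huq h.symm), zero_mul]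
    · rw [if_neg h2, Finset.sum_eq_single r]
      · simp [rotM, h1, h2]
      · intro u _ hu
        rw [rot_zero_row p q c s r u h1 h2 (fun h => hu h.symm), zero_mul]
      · simp


section
open Polynomial in
lemma extract (M : ℕ) (G : ℕ → ℂ)
    (h : ∀ t : ℝ, 0 < t →
      ∑ i ∈ range (M + 1), ((M.choose i : ℂ))^2 * G i * (t : ℂ) ^ i = G M * (1 + (t : ℂ)) ^ M)
    (a : ℕ) (ha : a ≤ M) : (M.choose a : ℂ) * G a = G M := by
  set P : Polynomial ℂ := ∑ i ∈ range (M + 1), Polynomial.C ((M.choose i : ℂ)^2 * G i) * X ^ i with hP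
  set Q : Polynomial ℂ := Polynomial.C (G M) * (X + 1) ^ M with hQ
  have hPQ : P = Q := by
    apply Polynomial.eq_of_infinite_eval_eq
    apply Set.Infinite.mono (s := (fun t : ℝ => (t : ℂ)) '' Set.Ioi 0)
    · rintro z ⟨t, ht, rfl⟩
      simp only [Set.mem_setOf_eq, hP, hQ, eval_finset_sum, eval_mul, eval_C, eval_pow, eval_X,
        eval_add, eval_one]
      rw [h t ht]
      ring
    · exact Set.Infinite.image (Set.injOn_of_injective Complex.ofReal_injective)
        (Set.Ioi_infinite 0)
  have hc := congrArg (fun p => Polynomial.coeff p a) hPQ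
  simp only [hP, hQ, Polynomial.finset_sum_coeff, Polynomial.coeff_C_mul,
    Polynomial.coeff_X_pow, Polynomial.coeff_X_add_one_pow] at hc
  rw [Finset.sum_congr rfl (fun i _ => by rw [mul_ite, mul_one, mul_zero]),
    Finset.sum_ite_eq (range (M + 1))] at hc
  rw [if_pos (Finset.mem_range.2 (Nat.lt_succ_of_le ha))] at hc
  have hch : (M.choose a : ℂ) ≠ 0 := by
    exact_mod_cast Nat.cast_ne_zero.2 (Nat.choose_pos ha).ne'
  exact mul_left_cancel₀ hch (by linear_combination hc)


end

lemma phi_mul_comp (α : ι → ℂ) (m m' : ι → ℕ) (w : ι → ℂ) :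
    phi m m' (fun r => α r * w r)
      = (∏ r, α r ^ m r * (starRingEnd ℂ) (α r) ^ m' r) * phi m m' w := by
  rw [phi, phi, ← Finset.prod_mul_distrib]
  apply Finset.prod_congr rfl
  intro r _
  rw [_root_.map_mul]
  ring

lemma phase (μ : Measure (Matrix.unitaryGroup ι ℂ)) [IsProbabilityMeasure μ]
    [μ.IsMulLeftInvariant] (p₀ : ι) (m m' : ι → ℕ) (h : m ≠ m') : PM μ p₀ m m' = 0 := by
  obtain ⟨q, hq⟩ := Function.ne_iff.1 h
  have hΔ : ((m q : ℤ) - (m' q : ℤ)) ≠ 0 := by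
    intro hc
    apply hq
    omega
  have hΔC : (((m q : ℤ) - (m' q : ℤ) : ℤ) : ℂ) ≠ 0 := Int.cast_ne_zero.2 hΔ
  set w : ℂ := (Real.pi : ℂ) * Complex.I / (((m q : ℤ) - (m' q : ℤ) : ℤ) : ℂ) with hw
  set z : ℂ := Complex.exp w with hz
  have hconjw : (starRingEnd ℂ) w = -w := by
    rw [hw]
    rw [map_div₀, _root_.map_mul, Complex.conj_ofReal, Complex.conj_I, map_intCast]
    ring
  have hconjz : (starRingEnd ℂ) z = Complex.exp (-w) := by
    rw [hz, ← Complex.exp_conj, hconjw]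
  have hz1 : ∀ r, (fun r => if r = q then z else 1) r *
      (starRingEnd ℂ) ((fun r => if r = q then z else 1) r) = 1 := by
    intro r
    by_cases hr : r = q
    · show (if r = q then z else 1) * (starRingEnd ℂ) (if r = q then z else 1) = 1
      rw [if_pos hr, hconjz, ← Complex.exp_add, add_neg_cancel, Complex.exp_zero]
    · simp [hr]
  set α : ι → ℂ := fun r => if r = q then z else 1 with hα
  have key := phi_invariance μ p₀ m m' (Matrix.diagonal α) (diag_unitary α hz1)
  have hrw : ∀ U : Matrix.unitaryGroup ι ℂ,
      phi m m' ((Matrix.diagonal α).mulVec (colV p₀ U))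
        = (∏ r, α r ^ m r * (starRingEnd ℂ) (α r) ^ m' r) * phi m m' (colV p₀ U) := by
    intro U
    rw [diag_mulVec]
    exact phi_mul_comp α m m' (colV p₀ U)
  rw [integral_congr_ae (Filter.Eventually.of_forall hrw), integral_const_mul] at key
  have hF : (∏ r, α r ^ m r * (starRingEnd ℂ) (α r) ^ m' r)
      = z ^ m q * (starRingEnd ℂ) z ^ m' q := by
    rw [Finset.prod_eq_single q]
    · simp [hα]
    · intro r _ hr
      simp [hα, hr]
    · simp
  have hFval : z ^ m q * (starRingEnd ℂ) z ^ m' q = -1 := by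
    rw [hconjz, hz, ← Complex.exp_nat_mul, ← Complex.exp_nat_mul, ← Complex.exp_add]
    have harg : (m q : ℂ) * w + (m' q : ℂ) * -w = (Real.pi : ℂ) * Complex.I := by
      have : (m q : ℂ) * w + (m' q : ℂ) * -w = (((m q : ℤ) - (m' q : ℤ) : ℤ) : ℂ) * w := by
        push_cast
        ring
      rw [this, hw, mul_div_cancel₀ _ hΔC]
    rw [harg, Complex.exp_pi_mul_I]
  rw [hF, hFval] at key
  rw [← PM] at key
  linear_combination (-1/2 : ℂ) * key

/-- exponent pattern: `i` at `p`, `M - i` at `q`, `m` elsewhere -/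
def upd2 (m : ι → ℕ) (p q : ι) (i M : ℕ) : ι → ℕ :=
  Function.update (Function.update m p i) q (M - i)

lemma upd2_p {m : ι → ℕ} {p q : ι} (hpq : p ≠ q) (i M : ℕ) : upd2 m p q i M p = i := by
  rw [upd2, Function.update_of_ne hpq, Function.update_self]

lemma upd2_q {m : ι → ℕ} {p q : ι} (i M : ℕ) : upd2 m p q i M q = M - i := by
  rw [upd2, Function.update_self]

lemma upd2_other {m : ι → ℕ} {p q : ι} {r : ι} (hrp : r ≠ p) (hrq : r ≠ q) (i M : ℕ) :
    upd2 m p q i M r = m r := by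
  rw [upd2, Function.update_of_ne hrq, Function.update_of_ne hrp]

lemma prod_split2 {β : Type*} [CommMonoid β] (p q : ι) (hpq : p ≠ q) (f : ι → β) :
    ∏ r, f r = f p * (f q * ∏ r ∈ (univ.erase p).erase q, f r) := by
  have hq : q ∈ univ.erase p := Finset.mem_erase.2 ⟨hpq.symm, Finset.mem_univ q⟩
  rw [← Finset.mul_prod_erase univ f (Finset.mem_univ p),
    ← Finset.mul_prod_erase (univ.erase p) f hq]

lemma phi_split (p q : ι) (hpq : p ≠ q) (m m' : ι → ℕ) (w : ι → ℂ) :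
    phi m m' w = (w p ^ m p * (starRingEnd ℂ) (w p) ^ m' p) *
      ((w q ^ m q * (starRingEnd ℂ) (w q) ^ m' q) *
        ∏ r ∈ (univ.erase p).erase q, w r ^ m r * (starRingEnd ℂ) (w r) ^ m' r) := by
  rw [phi]
  exact prod_split2 p q hpq _

lemma phi_rot_expand (p q : ι) (hpq : p ≠ q) (m : ι → ℕ) (hq : m q = 0) (c s : ℝ) (w : ι → ℂ) :
    phi m m ((rotM p q c s).mulVec w)
      = ∑ i ∈ range (m p + 1), ∑ j ∈ range (m p + 1),
          (((m p).choose i : ℂ) * ((m p).choose j : ℂ) *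
            ((c:ℂ)^i * (s:ℂ)^(m p - i)) * ((c:ℂ)^j * (s:ℂ)^(m p - j))) *
            phi (upd2 m p q i (m p)) (upd2 m p q j (m p)) w := by
  set Wv := (rotM p q c s).mulVec w with hWv
  have hWvp : Wv p = (c:ℂ) * w p + (s:ℂ) * w q := by
    rw [hWv, rot_mulVec p q hpq]
    simp
  have hWvo : ∀ r ∈ (univ.erase p).erase q, Wv r = w r := by
    intro r hr
    have h1 := Finset.mem_erase.1 hr
    have hrq := h1.1
    have hrp := (Finset.mem_erase.1 h1.2).1
    rw [hWv, rot_mulVec p q hpq]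
    simp [hrp, hrq]
  have hconj : (starRingEnd ℂ) (Wv p) = (c:ℂ) * (starRingEnd ℂ) (w p) + (s:ℂ) * (starRingEnd ℂ) (w q) := by
    rw [hWvp]
    simp only [_root_.map_add, _root_.map_mul, Complex.conj_ofReal]
  rw [phi_split p q hpq m m Wv, hq]
  simp only [pow_zero, one_mul]
  have hR : ∏ r ∈ (univ.erase p).erase q, Wv r ^ m r * (starRingEnd ℂ) (Wv r) ^ m r
      = ∏ r ∈ (univ.erase p).erase q, w r ^ m r * (starRingEnd ℂ) (w r) ^ m r := by
    apply Finset.prod_congr rfl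
    intro r hr
    rw [hWvo r hr]
  rw [hR, hconj, hWvp, add_pow, add_pow]
  rw [Finset.sum_mul_sum, Finset.sum_mul]
  apply Finset.sum_congr rfl
  intro i hi
  rw [Finset.sum_mul]
  apply Finset.sum_congr rfl
  intro j hj
  rw [phi_split p q hpq _ _ w]
  rw [upd2_p hpq, upd2_p hpq, upd2_q, upd2_q]
  have hRR : ∏ r ∈ (univ.erase p).erase q,
      w r ^ (upd2 m p q i (m p) r) * (starRingEnd ℂ) (w r) ^ (upd2 m p q j (m p) r)
      = ∏ r ∈ (univ.erase p).erase q, w r ^ m r * (starRingEnd ℂ) (w r) ^ m r := by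
    apply Finset.prod_congr rfl
    intro r hr
    have h1 := Finset.mem_erase.1 hr
    have h2 := Finset.mem_erase.1 h1.2
    rw [upd2_other h2.1 h1.1, upd2_other h2.1 h1.1]
  rw [hRR]
  push_cast
  ring

lemma rot_relation (μ : Measure (Matrix.unitaryGroup ι ℂ)) [IsProbabilityMeasure μ]
    [μ.IsMulLeftInvariant] (p₀ : ι) (p q : ι) (hpq : p ≠ q) (m : ι → ℕ) (hq : m q = 0)
    (t : ℝ) (ht : 0 < t) :
    ∑ i ∈ range (m p + 1), ((m p).choose i : ℂ)^2 *
        PM μ p₀ (upd2 m p q i (m p)) (upd2 m p q i (m p)) * (t:ℂ)^i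
      = PM μ p₀ m m * (1 + (t:ℂ))^(m p) := by
  set M := m p with hM
  have h1t : (0:ℝ) < 1 + t := by linarith
  set c : ℝ := Real.sqrt (t/(1+t)) with hc
  set s : ℝ := Real.sqrt (1/(1+t)) with hs
  have hc2 : c^2 = t/(1+t) := Real.sq_sqrt (by positivity)
  have hs2 : s^2 = 1/(1+t) := Real.sq_sqrt (by positivity)
  have hcs : c^2 + s^2 = 1 := by rw [hc2, hs2]; field_simp; ring
  -- invariance
  have hinv := phi_invariance μ p₀ m m (rotM p q c s) (rot_unitary p q hpq c s hcs)
  have hexp : ∀ U : Matrix.unitaryGroup ι ℂ,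
      phi m m ((rotM p q c s).mulVec (colV p₀ U))
        = ∑ i ∈ range (M + 1), ∑ j ∈ range (M + 1),
            ((M.choose i : ℂ) * (M.choose j : ℂ) *
              ((c:ℂ)^i * (s:ℂ)^(M - i)) * ((c:ℂ)^j * (s:ℂ)^(M - j))) *
              phi (upd2 m p q i M) (upd2 m p q j M) (colV p₀ U) :=
    fun U => phi_rot_expand p q hpq m hq c s (colV p₀ U)
  rw [integral_congr_ae (Filter.Eventually.of_forall hexp)] at hinv
  rw [integral_finset_sum _ (fun i _ => by
    apply integrable_finset_sum
    intro j _
    exact (integrable_phi μ p₀ _ _).const_mul _)] at hinv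
  have hswap : ∀ i ∈ range (M + 1),
      (∫ U, ∑ j ∈ range (M + 1),
          ((M.choose i : ℂ) * (M.choose j : ℂ) *
            ((c:ℂ)^i * (s:ℂ)^(M - i)) * ((c:ℂ)^j * (s:ℂ)^(M - j))) *
            phi (upd2 m p q i M) (upd2 m p q j M) (colV p₀ U) ∂μ)
        = ((M.choose i : ℂ))^2 * ((c:ℂ)^i * (s:ℂ)^(M - i))^2 *
            PM μ p₀ (upd2 m p q i M) (upd2 m p q i M) := by
    intro i hi
    rw [integral_finset_sum _ (fun j _ => (integrable_phi μ p₀ _ _).const_mul _)]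
    have hz : ∀ j ∈ range (M + 1), j ≠ i →
        (∫ U, ((M.choose i : ℂ) * (M.choose j : ℂ) *
            ((c:ℂ)^i * (s:ℂ)^(M - i)) * ((c:ℂ)^j * (s:ℂ)^(M - j))) *
            phi (upd2 m p q i M) (upd2 m p q j M) (colV p₀ U) ∂μ) = 0 := by
      intro j _ hji
      rw [integral_const_mul]
      have : PM μ p₀ (upd2 m p q i M) (upd2 m p q j M) = 0 := by
        apply phase
        intro hc
        apply hji
        have := congrFun hc p
        rw [upd2_p hpq, upd2_p hpq] at this
        omega
      rw [← PM, this, mul_zero]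
    rw [Finset.sum_eq_single i hz (fun hii => absurd hi hii)]
    rw [integral_const_mul, ← PM]
    ring
  rw [Finset.sum_congr rfl hswap] at hinv
  -- now hinv : ∑ i, C² (c^i s^(M-i))² PM_i = PM m m
  -- multiply by (1+t)^M
  have hfactor : ∀ i ∈ range (M + 1),
      ((M.choose i : ℂ))^2 * ((c:ℂ)^i * (s:ℂ)^(M - i))^2 *
          PM μ p₀ (upd2 m p q i M) (upd2 m p q i M) * (1 + (t:ℂ))^M
        = ((M.choose i : ℂ))^2 * PM μ p₀ (upd2 m p q i M) (upd2 m p q i M) * (t:ℂ)^i := by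
    intro i hi
    have hiM : i ≤ M := Nat.lt_succ_iff.1 (Finset.mem_range.1 hi)
    have hc2C : ((c:ℂ))^2 = (t:ℂ)/(1+(t:ℂ)) := by
      have h := congrArg (fun x : ℝ => (x : ℂ)) hc2
      push_cast at h
      exact h
    have hs2C : ((s:ℂ))^2 = 1/(1+(t:ℂ)) := by
      have h := congrArg (fun x : ℝ => (x : ℂ)) hs2
      push_cast at h
      exact h
    have h1tC : (1 + (t:ℂ)) ≠ 0 := by
      have : ((1 + t : ℝ) : ℂ) ≠ 0 := Complex.ofReal_ne_zero.2 (ne_of_gt h1t)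
      push_cast at this
      exact this
    have hpow : ((c:ℂ)^i * (s:ℂ)^(M - i))^2 * (1 + (t:ℂ))^M = (t:ℂ)^i := by
      have e1 : ((c:ℂ)^i * (s:ℂ)^(M - i))^2 = ((c:ℂ)^2)^i * ((s:ℂ)^2)^(M-i) := by ring
      rw [e1, hc2C, hs2C, div_pow, div_pow, one_pow]
      rw [show (1 + (t:ℂ))^M = (1+(t:ℂ))^i * (1+(t:ℂ))^(M-i) from by
        rw [← pow_add, Nat.add_sub_cancel' hiM]]
      field_simp
    calc ((M.choose i : ℂ))^2 * ((c:ℂ)^i * (s:ℂ)^(M - i))^2 *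
          PM μ p₀ (upd2 m p q i M) (upd2 m p q i M) * (1 + (t:ℂ))^M
        = ((M.choose i : ℂ))^2 * PM μ p₀ (upd2 m p q i M) (upd2 m p q i M) *
            (((c:ℂ)^i * (s:ℂ)^(M - i))^2 * (1 + (t:ℂ))^M) := by ring
      _ = _ := by rw [hpow]
  calc ∑ i ∈ range (M + 1), ((M.choose i : ℂ))^2 *
        PM μ p₀ (upd2 m p q i M) (upd2 m p q i M) * (t:ℂ)^i
      = ∑ i ∈ range (M + 1), ((M.choose i : ℂ))^2 * ((c:ℂ)^i * (s:ℂ)^(M - i))^2 *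
          PM μ p₀ (upd2 m p q i M) (upd2 m p q i M) * (1 + (t:ℂ))^M :=
        (Finset.sum_congr rfl hfactor).symm
    _ = (∑ i ∈ range (M + 1), ((M.choose i : ℂ))^2 * ((c:ℂ)^i * (s:ℂ)^(M - i))^2 *
          PM μ p₀ (upd2 m p q i M) (upd2 m p q i M)) * (1 + (t:ℂ))^M := by
        rw [← Finset.sum_mul]
    _ = PM μ p₀ m m * (1 + (t:ℂ))^M := by rw [hinv]

def mergeFn (m : ι → ℕ) (p q : ι) : ι → ℕ :=
  Function.update (Function.update m p (m p + m q)) q 0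

lemma merge (μ : Measure (Matrix.unitaryGroup ι ℂ)) [IsProbabilityMeasure μ]
    [μ.IsMulLeftInvariant] (p₀ : ι) (p q : ι) (hpq : p ≠ q) (m : ι → ℕ) :
    (((m p + m q).factorial : ℕ) : ℂ) * PM μ p₀ m m
      = (((m p).factorial : ℕ) : ℂ) * (((m q).factorial : ℕ) : ℂ) *
          PM μ p₀ (mergeFn m p q) (mergeFn m p q) := by
  set M := m p + m q with hMdef
  set m' := mergeFn m p q with hm'
  have hm'p : m' p = M := by
    rw [hm', mergeFn, Function.update_of_ne hpq, Function.update_self]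
  have hm'q : m' q = 0 := by rw [hm', mergeFn, Function.update_self]
  have hm'o : ∀ r, r ≠ p → r ≠ q → m' r = m r := by
    intro r h1 h2
    rw [hm', mergeFn, Function.update_of_ne h2, Function.update_of_ne h1]
  have hupdM : upd2 m' p q M M = m' := by
    funext r
    by_cases h1 : r = q
    · rw [h1, upd2_q, hm'q, Nat.sub_self]
    · by_cases h2 : r = p
      · rw [h2, upd2_p hpq, hm'p]
      · rw [upd2_other h2 h1]
  have hupda : upd2 m' p q (m p) M = m := by
    funext r
    by_cases h1 : r = q
    · rw [h1, upd2_q, hMdef]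
      omega
    · by_cases h2 : r = p
      · rw [h2, upd2_p hpq]
      · rw [upd2_other h2 h1, hm'o r h2 h1]
  have hext : ∀ t : ℝ, 0 < t →
      ∑ i ∈ range (M + 1), ((M.choose i : ℂ))^2 *
          PM μ p₀ (upd2 m' p q i M) (upd2 m' p q i M) * (t:ℂ)^i
        = PM μ p₀ (upd2 m' p q M M) (upd2 m' p q M M) * (1 + (t:ℂ))^M := by
    intro t ht
    have h := rot_relation μ p₀ p q hpq m' hm'q t ht
    rw [hm'p] at h
    rw [hupdM]
    exact h
  have hextract := extract M (fun i => PM μ p₀ (upd2 m' p q i M) (upd2 m' p q i M))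
    hext (m p) (by omega)
  rw [hupda, hupdM] at hextract
  have hfact : ((M.factorial : ℕ) : ℂ)
      = ((M.choose (m p) : ℕ) : ℂ) * (((m p).factorial : ℕ) : ℂ) * (((m q).factorial : ℕ) : ℂ) := by
    have h1 : M.choose (m p) * (m p).factorial * (M - m p).factorial = M.factorial :=
      Nat.choose_mul_factorial_mul_factorial (by omega)
    have h2 : M - m p = m q := by omega
    rw [h2] at h1
    exact_mod_cast h1.symm
  rw [hfact]
  linear_combination ((((m p).factorial : ℕ) : ℂ) * (((m q).factorial : ℕ) : ℂ)) * hextract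


def bump (m : ι → ℕ) (p : ι) : ι → ℕ := Function.update m p (m p + 1)

def deltaF (p₀ : ι) (T : ℕ) : ι → ℕ := fun r => if r = p₀ then T else 0

lemma phi_bump (m : ι → ℕ) (p : ι) (w : ι → ℂ) :
    phi (bump m p) (bump m p) w = (w p * (starRingEnd ℂ) (w p)) * phi m m w := by
  rw [phi, phi, ← Finset.mul_prod_erase univ _ (Finset.mem_univ p),
    ← Finset.mul_prod_erase univ (fun r => w r ^ m r * (starRingEnd ℂ) (w r) ^ m r)
      (Finset.mem_univ p)]
  have h1 : ∏ r ∈ univ.erase p, w r ^ (bump m p r) * (starRingEnd ℂ) (w r) ^ (bump m p r)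
      = ∏ r ∈ univ.erase p, w r ^ m r * (starRingEnd ℂ) (w r) ^ m r := by
    apply Finset.prod_congr rfl
    intro r hr
    rw [bump, Function.update_of_ne (Finset.mem_erase.1 hr).1]
  rw [h1, bump, Function.update_self]
  ring

lemma sum_rule (μ : Measure (Matrix.unitaryGroup ι ℂ)) [IsProbabilityMeasure μ]
    [μ.IsMulLeftInvariant] (p₀ : ι) (m : ι → ℕ) :
    ∑ p, PM μ p₀ (bump m p) (bump m p) = PM μ p₀ m m := by
  have hpoint : ∀ U : Matrix.unitaryGroup ι ℂ,
      ∑ p, phi (bump m p) (bump m p) (colV p₀ U) = phi m m (colV p₀ U) := by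
    intro U
    rw [Finset.sum_congr rfl (fun p _ => phi_bump m p (colV p₀ U)),
      ← Finset.sum_mul, col_unit, one_mul]
  calc ∑ p, PM μ p₀ (bump m p) (bump m p)
      = ∫ U, ∑ p, phi (bump m p) (bump m p) (colV p₀ U) ∂μ :=
        (integral_finset_sum _ (fun p _ => integrable_phi μ p₀ _ _)).symm
    _ = ∫ U, phi m m (colV p₀ U) ∂μ :=
        integral_congr_ae (Filter.Eventually.of_forall hpoint)
    _ = PM μ p₀ m m := rfl

lemma collapse (μ : Measure (Matrix.unitaryGroup ι ℂ)) [IsProbabilityMeasure μ]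
    [μ.IsMulLeftInvariant] (p₀ : ι) (m : ι → ℕ) :
    (((∑ p, m p).factorial : ℕ) : ℂ) * PM μ p₀ m m
      = (∏ p, (((m p).factorial : ℕ) : ℂ)) *
          PM μ p₀ (deltaF p₀ (∑ p, m p)) (deltaF p₀ (∑ p, m p)) := by
  suffices H : ∀ k (m : ι → ℕ), (∑ p ∈ univ.erase p₀, m p) = k →
      (((∑ p, m p).factorial : ℕ) : ℂ) * PM μ p₀ m m
        = (∏ p, (((m p).factorial : ℕ) : ℂ)) *
            PM μ p₀ (deltaF p₀ (∑ p, m p)) (deltaF p₀ (∑ p, m p)) by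
    exact H _ m rfl
  intro k
  induction k using Nat.strong_induction_on with
  | _ k ih =>
    intro m hk
    by_cases h0 : k = 0
    · subst h0
      have hz : ∀ p ∈ univ.erase p₀, m p = 0 := fun p hp =>
        (Finset.sum_eq_zero_iff.1 hk) p hp
      have hdecomp : ∑ p, m p = m p₀ := by
        rw [← Finset.add_sum_erase univ m (Finset.mem_univ p₀),
          Finset.sum_eq_zero hz, add_zero]
      have hm : m = deltaF p₀ (∑ p, m p) := by
        funext r
        by_cases hr : r = p₀
        · rw [hr, deltaF]
          simp [hdecomp]
        · rw [deltaF]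
          simp only [hr, if_false]
          exact hz r (Finset.mem_erase.2 ⟨hr, Finset.mem_univ r⟩)
      have hprod : ∏ p, (((m p).factorial : ℕ) : ℂ) = (((∑ p, m p).factorial : ℕ) : ℂ) := by
        rw [← Finset.mul_prod_erase univ _ (Finset.mem_univ p₀)]
        have h2 : ∏ p ∈ univ.erase p₀, (((m p).factorial : ℕ) : ℂ) = 1 := by
          apply Finset.prod_eq_one
          intro p hp
          rw [hz p hp]
          simp
        rw [h2, hdecomp, mul_one]
      rw [hprod, ← hm]
    · obtain ⟨q, hqmem, hq0⟩ : ∃ q ∈ univ.erase p₀, m q ≠ 0 := by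
        apply Finset.exists_ne_zero_of_sum_ne_zero
        rw [hk]
        exact h0
      have hqp : q ≠ p₀ := (Finset.mem_erase.1 hqmem).1
      have hpq : p₀ ≠ q := hqp.symm
      set m' := mergeFn m p₀ q with hm'def
      have hm'p : m' p₀ = m p₀ + m q := by
        rw [hm'def, mergeFn, Function.update_of_ne hpq, Function.update_self]
      have hm'q : m' q = 0 := by rw [hm'def, mergeFn, Function.update_self]
      have hm'o : ∀ r, r ≠ p₀ → r ≠ q → m' r = m r := by
        intro r h1 h2
        rw [hm'def, mergeFn, Function.update_of_ne h2, Function.update_of_ne h1]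
      have hrest' : ∑ p ∈ (univ.erase p₀).erase q, m' p = ∑ p ∈ (univ.erase p₀).erase q, m p :=
        Finset.sum_congr rfl (fun r hr => hm'o r
          (Finset.mem_erase.1 (Finset.mem_erase.1 hr).2).1 (Finset.mem_erase.1 hr).1)
      have hq_in : q ∈ univ.erase p₀ := hqmem
      have he4 : ∑ p ∈ univ.erase p₀, m p = m q + ∑ p ∈ (univ.erase p₀).erase q, m p :=
        (Finset.add_sum_erase _ m hq_in).symm
      have hek : ∑ p ∈ univ.erase p₀, m' p = k - m q := by
        rw [← Finset.add_sum_erase _ m' hq_in, hm'q, zero_add, hrest']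
        omega
      have hlt : k - m q < k := by omega
      have IH := ih _ hlt m' hek
      have hsum' : ∑ p, m' p = ∑ p, m p := by
        have e1 : ∑ p, m' p = m' p₀ + ∑ p ∈ univ.erase p₀, m' p :=
          (Finset.add_sum_erase _ m' (Finset.mem_univ p₀)).symm
        have e2 : ∑ p, m p = m p₀ + ∑ p ∈ univ.erase p₀, m p :=
          (Finset.add_sum_erase _ m (Finset.mem_univ p₀)).symm
        have e3 : ∑ p ∈ univ.erase p₀, m' p = 0 + ∑ p ∈ (univ.erase p₀).erase q, m p := by
          rw [← Finset.add_sum_erase _ m' hq_in, hm'q, hrest']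
        rw [e1, e2, e3, he4, hm'p]
        omega
      rw [hsum'] at IH
      have hmerge := merge μ p₀ p₀ q hpq m
      have hfacne : (((m p₀ + m q).factorial : ℕ) : ℂ) ≠ 0 := by
        exact_mod_cast Nat.factorial_ne_zero _
      have hprodm : ∏ p, (((m p).factorial : ℕ) : ℂ)
          = (((m p₀).factorial : ℕ) : ℂ) * (((m q).factorial : ℕ) : ℂ) *
              ∏ r ∈ (univ.erase p₀).erase q, (((m r).factorial : ℕ) : ℂ) := by
        rw [prod_split2 p₀ q hpq (fun p => (((m p).factorial : ℕ) : ℂ))]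
        ring
      have hprodm' : ∏ p, (((m' p).factorial : ℕ) : ℂ)
          = (((m p₀ + m q).factorial : ℕ) : ℂ) *
              ∏ r ∈ (univ.erase p₀).erase q, (((m r).factorial : ℕ) : ℂ) := by
        rw [prod_split2 p₀ q hpq (fun p => (((m' p).factorial : ℕ) : ℂ)), hm'p, hm'q]
        have hre : ∏ r ∈ (univ.erase p₀).erase q, (((m' r).factorial : ℕ) : ℂ)
            = ∏ r ∈ (univ.erase p₀).erase q, (((m r).factorial : ℕ) : ℂ) := by
          apply Finset.prod_congr rfl
          intro r hr
          rw [hm'o r (Finset.mem_erase.1 (Finset.mem_erase.1 hr).2).1 (Finset.mem_erase.1 hr).1]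
        rw [hre]
        simp [Nat.factorial]
      apply mul_left_cancel₀ hfacne
      calc (((m p₀ + m q).factorial : ℕ) : ℂ) *
            ((((∑ p, m p).factorial : ℕ) : ℂ) * PM μ p₀ m m)
          = (((∑ p, m p).factorial : ℕ) : ℂ) *
              ((((m p₀ + m q).factorial : ℕ) : ℂ) * PM μ p₀ m m) := by ring
        _ = (((∑ p, m p).factorial : ℕ) : ℂ) *
              ((((m p₀).factorial : ℕ) : ℂ) * (((m q).factorial : ℕ) : ℂ) * PM μ p₀ m' m') := by
            rw [hmerge]
        _ = (((m p₀).factorial : ℕ) : ℂ) * (((m q).factorial : ℕ) : ℂ) *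
              ((((∑ p, m p).factorial : ℕ) : ℂ) * PM μ p₀ m' m') := by ring
        _ = (((m p₀).factorial : ℕ) : ℂ) * (((m q).factorial : ℕ) : ℂ) *
              ((∏ p, (((m' p).factorial : ℕ) : ℂ)) *
                PM μ p₀ (deltaF p₀ (∑ p, m p)) (deltaF p₀ (∑ p, m p))) := by rw [IH]
        _ = (((m p₀ + m q).factorial : ℕ) : ℂ) *
              ((∏ p, (((m p).factorial : ℕ) : ℂ)) *
                PM μ p₀ (deltaF p₀ (∑ p, m p)) (deltaF p₀ (∑ p, m p))) := by
            rw [hprodm', hprodm]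
            ring

lemma deltaF_sum (p₀ : ι) (S : ℕ) : ∑ p, deltaF p₀ S p = S := by
  simp [deltaF]

lemma gdelta (μ : Measure (Matrix.unitaryGroup ι ℂ)) [IsProbabilityMeasure μ]
    [μ.IsMulLeftInvariant] (p₀ : ι) (T : ℕ) :
    PM μ p₀ (deltaF p₀ T) (deltaF p₀ T) * (∏ i ∈ range T, ((Fintype.card ι : ℂ) + (i : ℂ)))
      = ((T.factorial : ℕ) : ℂ) := by
  induction T with
  | zero =>
    have h : deltaF p₀ 0 = (fun _ => (0:ℕ)) := by
      funext r
      rw [deltaF]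
      simp
    rw [h, PM_zero]
    simp
  | succ T IHT =>
    have hbump0 : bump (deltaF p₀ T) p₀ = deltaF p₀ (T+1) := by
      funext r
      by_cases hr : r = p₀
      · rw [hr, bump, Function.update_self]
        simp [deltaF]
      · rw [bump, Function.update_of_ne hr]
        simp [deltaF, hr]
    have hstar : ∀ p, p ≠ p₀ →
        (((T+1).factorial : ℕ) : ℂ) * PM μ p₀ (bump (deltaF p₀ T) p) (bump (deltaF p₀ T) p)
          = ((T.factorial : ℕ) : ℂ) * PM μ p₀ (deltaF p₀ (T+1)) (deltaF p₀ (T+1)) := by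
      intro p hp
      have hp₀p : p₀ ≠ p := fun h => hp h.symm
      have hcol := collapse μ p₀ (bump (deltaF p₀ T) p)
      have hsb : ∑ r, bump (deltaF p₀ T) p r = T + 1 := by
        have h := Finset.add_sum_erase univ (deltaF p₀ T) (Finset.mem_univ p)
        rw [deltaF_sum] at h
        rw [bump, Finset.sum_update_of_mem (Finset.mem_univ p),
          Finset.sdiff_singleton_eq_erase]
        omega
      rw [hsb] at hcol
      have hprodb : ∏ r, ((((bump (deltaF p₀ T) p) r).factorial : ℕ) : ℂ)
          = ((T.factorial : ℕ) : ℂ) := by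
        rw [prod_split2 p₀ p hp₀p (fun r => ((((bump (deltaF p₀ T) p) r).factorial : ℕ) : ℂ))]
        have h1 : bump (deltaF p₀ T) p p₀ = T := by
          rw [bump, Function.update_of_ne hp₀p, deltaF]
          simp
        have h2 : bump (deltaF p₀ T) p p = 1 := by
          rw [bump, Function.update_self, deltaF]
          simp [hp]
        have h3 : ∏ r ∈ (univ.erase p₀).erase p, ((((bump (deltaF p₀ T) p) r).factorial : ℕ) : ℂ)
            = 1 := by
          apply Finset.prod_eq_one
          intro r hr
          have hrp := (Finset.mem_erase.1 hr).1
          have hrp₀ := (Finset.mem_erase.1 (Finset.mem_erase.1 hr).2).1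
          rw [bump, Function.update_of_ne hrp, deltaF]
          simp [hrp₀]
        rw [h1, h2, h3]
        simp
      rw [hprodb] at hcol
      exact hcol
    have hsr := sum_rule μ p₀ (deltaF p₀ T)
    have hcard1 : 1 ≤ Fintype.card ι := Fintype.card_pos_iff.2 ⟨p₀⟩
    have key : (((T+1).factorial : ℕ) : ℂ) * PM μ p₀ (deltaF p₀ T) (deltaF p₀ T)
        = ((T.factorial : ℕ) : ℂ) * ((Fintype.card ι : ℂ) + (T:ℂ)) *
            PM μ p₀ (deltaF p₀ (T+1)) (deltaF p₀ (T+1)) := by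
      calc (((T+1).factorial : ℕ) : ℂ) * PM μ p₀ (deltaF p₀ T) (deltaF p₀ T)
          = ∑ p, (((T+1).factorial : ℕ) : ℂ) *
              PM μ p₀ (bump (deltaF p₀ T) p) (bump (deltaF p₀ T) p) := by
            rw [← hsr, Finset.mul_sum]
        _ = (((T+1).factorial : ℕ) : ℂ) *
              PM μ p₀ (bump (deltaF p₀ T) p₀) (bump (deltaF p₀ T) p₀) +
            ∑ p ∈ univ.erase p₀, (((T+1).factorial : ℕ) : ℂ) *
              PM μ p₀ (bump (deltaF p₀ T) p) (bump (deltaF p₀ T) p) :=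
            (Finset.add_sum_erase _ _ (Finset.mem_univ p₀)).symm
        _ = (((T+1).factorial : ℕ) : ℂ) * PM μ p₀ (deltaF p₀ (T+1)) (deltaF p₀ (T+1)) +
            ∑ p ∈ univ.erase p₀, ((T.factorial : ℕ) : ℂ) *
              PM μ p₀ (deltaF p₀ (T+1)) (deltaF p₀ (T+1)) := by
            rw [hbump0, Finset.sum_congr rfl (fun p hp => hstar p (Finset.mem_erase.1 hp).1)]
        _ = (((T+1).factorial : ℕ) : ℂ) * PM μ p₀ (deltaF p₀ (T+1)) (deltaF p₀ (T+1)) +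
            ((Fintype.card ι - 1 : ℕ) : ℂ) *
              (((T.factorial : ℕ) : ℂ) * PM μ p₀ (deltaF p₀ (T+1)) (deltaF p₀ (T+1))) := by
            rw [Finset.sum_const, Finset.card_erase_of_mem (Finset.mem_univ p₀),
              Finset.card_univ, nsmul_eq_mul]
        _ = ((T.factorial : ℕ) : ℂ) * ((Fintype.card ι : ℂ) + (T:ℂ)) *
              PM μ p₀ (deltaF p₀ (T+1)) (deltaF p₀ (T+1)) := by
            have hf : (((T+1).factorial : ℕ) : ℂ) = ((T:ℂ)+1) * ((T.factorial : ℕ) : ℂ) := by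
              rw [Nat.factorial_succ]
              push_cast
              ring
            have hc : ((Fintype.card ι - 1 : ℕ) : ℂ) = (Fintype.card ι : ℂ) - 1 := by
              rw [Nat.cast_sub hcard1]
              simp
            rw [hf, hc]
            ring
    have hTfne : ((T.factorial : ℕ) : ℂ) ≠ 0 := by exact_mod_cast Nat.factorial_ne_zero T
    apply mul_left_cancel₀ hTfne
    calc ((T.factorial : ℕ) : ℂ) * (PM μ p₀ (deltaF p₀ (T+1)) (deltaF p₀ (T+1)) *
          ∏ i ∈ range (T+1), ((Fintype.card ι : ℂ) + (i : ℂ)))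
        = (((T.factorial : ℕ) : ℂ) * ((Fintype.card ι : ℂ) + (T:ℂ)) *
            PM μ p₀ (deltaF p₀ (T+1)) (deltaF p₀ (T+1))) *
            ∏ i ∈ range T, ((Fintype.card ι : ℂ) + (i : ℂ)) := by
          rw [Finset.prod_range_succ]
          ring
      _ = ((((T+1).factorial : ℕ) : ℂ) * PM μ p₀ (deltaF p₀ T) (deltaF p₀ T)) *
            ∏ i ∈ range T, ((Fintype.card ι : ℂ) + (i : ℂ)) := by rw [← key]
      _ = (((T+1).factorial : ℕ) : ℂ) * (PM μ p₀ (deltaF p₀ T) (deltaF p₀ T) *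
            ∏ i ∈ range T, ((Fintype.card ι : ℂ) + (i : ℂ))) := by ring
      _ = (((T+1).factorial : ℕ) : ℂ) * ((T.factorial : ℕ) : ℂ) := by rw [IHT]
      _ = ((T.factorial : ℕ) : ℂ) * (((T+1).factorial : ℕ) : ℂ) := by ring

lemma PM_formula (μ : Measure (Matrix.unitaryGroup ι ℂ)) [IsProbabilityMeasure μ]
    [μ.IsMulLeftInvariant] (p₀ : ι) (m : ι → ℕ) :
    PM μ p₀ m m * (∏ i ∈ range (∑ p, m p), ((Fintype.card ι : ℂ) + (i : ℂ)))
      = ∏ p, (((m p).factorial : ℕ) : ℂ) := by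
  have hc := collapse μ p₀ m
  have hg := gdelta μ p₀ (∑ p, m p)
  have hne : (((∑ p, m p).factorial : ℕ) : ℂ) ≠ 0 := by
    exact_mod_cast Nat.factorial_ne_zero _
  apply mul_left_cancel₀ hne
  calc (((∑ p, m p).factorial : ℕ) : ℂ) *
        (PM μ p₀ m m * ∏ i ∈ range (∑ p, m p), ((Fintype.card ι : ℂ) + (i : ℂ)))
      = ((((∑ p, m p).factorial : ℕ) : ℂ) * PM μ p₀ m m) *
          ∏ i ∈ range (∑ p, m p), ((Fintype.card ι : ℂ) + (i : ℂ)) := by ring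
    _ = ((∏ p, (((m p).factorial : ℕ) : ℂ)) *
          PM μ p₀ (deltaF p₀ (∑ p, m p)) (deltaF p₀ (∑ p, m p))) *
          ∏ i ∈ range (∑ p, m p), ((Fintype.card ι : ℂ) + (i : ℂ)) := by rw [hc]
    _ = (∏ p, (((m p).factorial : ℕ) : ℂ)) *
          (PM μ p₀ (deltaF p₀ (∑ p, m p)) (deltaF p₀ (∑ p, m p)) *
            ∏ i ∈ range (∑ p, m p), ((Fintype.card ι : ℂ) + (i : ℂ))) := by ring
    _ = (∏ p, (((m p).factorial : ℕ) : ℂ)) * (((∑ p, m p).factorial : ℕ) : ℂ) := by rw [hg]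
    _ = (((∑ p, m p).factorial : ℕ) : ℂ) * ∏ p, (((m p).factorial : ℕ) : ℂ) := by ring


end StmtAux

namespace StmtAux5
open Equiv
variable {T : ℕ}

lemma k_inv_zpow {s : ℕ} (π : Equiv.Perm (Fin T)) (k : Fin T → Fin s) (hk : k ∘ π = k) :
    ∀ (i : ℤ) (l : Fin T), k ((π ^ i) l) = k l := by
  have h1 : ∀ l, k (π l) = k l := fun l => congrFun hk l
  have h2 : ∀ l, k (π⁻¹ l) = k l := by
    intro l
    conv_rhs => rw [← (show π (π⁻¹ l) = l from Equiv.apply_symm_apply π l)]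
    rw [h1]
  intro i
  induction i using Int.induction_on with
  | zero => simp
  | succ n ih => intro l; rw [show ((n : ℤ) + 1) = (n : ℤ) + 1 from rfl, _root_.zpow_add_one,
      Equiv.Perm.mul_apply, ih, h1]
  | pred n ih => intro l; rw [sub_eq_add_neg, _root_.zpow_add, _root_.zpow_neg_one,
      Equiv.Perm.mul_apply, ih, h2]

lemma k_inv_sameCycle {s : ℕ} (π : Equiv.Perm (Fin T)) (k : Fin T → Fin s) (hk : k ∘ π = k)
    {l l' : Fin T} (h : π.SameCycle l l') : k l = k l' := by
  obtain ⟨i, hi⟩ := h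
  rw [← hi, k_inv_zpow π k hk]

noncomputable def invEquiv (s : ℕ) (π : Equiv.Perm (Fin T)) :
    {k : Fin T → Fin s // k ∘ π = k} ≃
      (({l : Fin T // π l = l} ⊕ {c : Equiv.Perm (Fin T) // c ∈ π.cycleFactorsFinset}) → Fin s) := by
  classical
  have hpt : ∀ c : {c : Equiv.Perm (Fin T) // c ∈ π.cycleFactorsFinset}, c.1.support.Nonempty := by
    intro c
    exact (Equiv.Perm.mem_cycleFactorsFinset_iff.1 c.2).1.nonempty_support
  refine
    { toFun := fun k x => match x with
        | Sum.inl l => k.1 l.1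
        | Sum.inr c => k.1 (hpt c).choose
      invFun := fun h => ⟨fun l =>
        if hl : π l = l then h (Sum.inl ⟨l, hl⟩)
        else h (Sum.inr ⟨π.cycleOf l,
          Equiv.Perm.cycleOf_mem_cycleFactorsFinset_iff.2 (Equiv.Perm.mem_support.2 hl)⟩), ?_⟩
      left_inv := ?_
      right_inv := ?_ }
  · funext l
    simp only [Function.comp_apply]
    by_cases hl : π l = l
    · simp [hl]
    · have hl2 : ¬ π (π l) = π l := fun h => hl (π.injective h)
      rw [dif_neg hl, dif_neg hl2]
      congr 2
      exact Subtype.ext (Equiv.Perm.cycleOf_self_apply π l)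
  · rintro ⟨k, hk⟩
    apply Subtype.ext
    funext l
    simp only
    by_cases hl : π l = l
    · rw [dif_pos hl]
    · rw [dif_neg hl]
      set c : {c : Equiv.Perm (Fin T) // c ∈ π.cycleFactorsFinset} :=
        ⟨π.cycleOf l, Equiv.Perm.cycleOf_mem_cycleFactorsFinset_iff.2 (Equiv.Perm.mem_support.2 hl)⟩
      have hmem : (hpt c).choose ∈ (π.cycleOf l).support := (hpt c).choose_spec
      have hsc : π.SameCycle l (hpt c).choose :=
        (Equiv.Perm.mem_support_cycleOf_iff.1 hmem).1
      exact (k_inv_sameCycle π k hk hsc).symm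
  · intro h
    funext x
    match x with
    | Sum.inl l =>
      simp only
      rw [dif_pos l.2]
    | Sum.inr c =>
      simp only
      have hx : (hpt c).choose ∈ c.1.support := (hpt c).choose_spec
      have hfix : ¬ π ((hpt c).choose) = (hpt c).choose := by
        have h1 : c.1 ((hpt c).choose) = π ((hpt c).choose) :=
          (Equiv.Perm.mem_cycleFactorsFinset_iff.1 c.2).2 _ hx
        have h2 : c.1 ((hpt c).choose) ≠ (hpt c).choose := Equiv.Perm.mem_support.1 hx
        rw [← h1]
        exact h2
      rw [dif_neg hfix]
      congr 1
      apply congrArg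
      exact Subtype.ext (Equiv.Perm.cycle_is_cycleOf hx c.2).symm

lemma card_fixed_subtype (π : Equiv.Perm (Fin T)) :
    Fintype.card {l : Fin T // π l = l} = T - π.support.card := by
  classical
  rw [Fintype.card_subtype]
  have h := Finset.card_filter_add_card_filter_not
    (s := (Finset.univ : Finset (Fin T))) (fun l => π l = l)
  have hsupp : π.support = Finset.univ.filter (fun l => ¬ π l = l) := by
    ext l
    simp [Equiv.Perm.mem_support]
  rw [← hsupp] at h
  have h5 : (Finset.univ : Finset (Fin T)).card = T := by simp
  omega

lemma card_cycleType (π : Equiv.Perm (Fin T)) :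
    π.cycleType.card = π.cycleFactorsFinset.card := by
  classical
  rw [Equiv.Perm.cycleType_def, Multiset.card_map]
  rfl

lemma mult_card_le_sum (s : Multiset ℕ) (h : ∀ x ∈ s, 1 ≤ x) : Multiset.card s ≤ s.sum := by
  induction s using Multiset.induction_on with
  | empty => simp
  | cons a t ih =>
    simp only [Multiset.card_cons, Multiset.sum_cons]
    have h1 := h a (Multiset.mem_cons_self a t)
    have h2 := ih (fun x hx => h x (Multiset.mem_cons_of_mem hx))
    omega

lemma cycleType_card_le_sum (π : Equiv.Perm (Fin T)) :
    π.cycleType.card ≤ π.cycleType.sum := by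
  apply mult_card_le_sum
  intro x hx
  have := Equiv.Perm.two_le_of_mem_cycleType hx
  omega

lemma count_invariant_fns (s : ℕ) (π : Equiv.Perm (Fin T)) :
    Fintype.card {k : Fin T → Fin s // k ∘ π = k} = s ^ cycleCount π := by
  classical
  rw [Fintype.card_congr (invEquiv s π), Fintype.card_fun, Fintype.card_sum,
    card_fixed_subtype, Fintype.card_coe, Fintype.card_fin]
  congr 1
  have h1 : π.cycleType.sum = π.support.card := Equiv.Perm.sum_cycleType π
  have h2 := card_cycleType π
  have h3 := cycleType_card_le_sum π
  have h4 : π.support.card ≤ T := by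
    have := Finset.card_le_univ π.support
    simpa using this
  unfold cycleCount
  omega

-- C1: permutation counting
variable {κ : Type*} [Fintype κ] [DecidableEq κ]

def cnt (a : Fin T → κ) (p : κ) : ℕ := (Finset.univ.filter (fun l => a l = p)).card

lemma cnt_card (a : Fin T → κ) (p : κ) : Fintype.card {l : Fin T // a l = p} = cnt a p :=
  Fintype.card_subtype _

def matchEquiv (a b : Fin T → κ) :
    {π : Equiv.Perm (Fin T) // b ∘ π = a} ≃ (∀ p : κ, {l : Fin T // a l = p} ≃ {l : Fin T // b l = p}) where
  toFun := fun ⟨π, hπ⟩ p =>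
    { toFun := fun l => ⟨π l.1, (congrFun hπ l.1).trans l.2⟩
      invFun := fun l => ⟨π⁻¹ l.1, by
        have h := congrFun hπ (π⁻¹ l.1)
        simp only [Function.comp_apply, (show π (π⁻¹ l.1) = l.1 from Equiv.apply_symm_apply π l.1)] at h
        rw [← h]
        exact l.2⟩
      left_inv := fun l => Subtype.ext (by simp)
      right_inv := fun l => Subtype.ext (by simp) }
  invFun := fun e =>
    ⟨((Equiv.sigmaFiberEquiv a).symm.trans ((Equiv.sigmaCongrRight (fun p => e p)).trans
        (Equiv.sigmaFiberEquiv b))), by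
      funext l
      simp only [Function.comp_apply, Equiv.trans_apply, Equiv.sigmaCongrRight_apply]
      have h1 : (Equiv.sigmaFiberEquiv a).symm l = ⟨a l, ⟨l, rfl⟩⟩ := rfl
      rw [h1]
      exact ((e (a l)) ⟨l, rfl⟩).2⟩
  left_inv := fun ⟨π, hπ⟩ => Subtype.ext (Equiv.ext fun l => rfl)
  right_inv := fun e => by
    funext p
    apply Equiv.ext
    rintro ⟨lv, hl⟩
    subst hl
    rfl

lemma card_match (a b : Fin T → κ) :
    Fintype.card {π : Equiv.Perm (Fin T) // b ∘ π = a}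
      = if cnt a = cnt b then ∏ p : κ, (cnt a p).factorial else 0 := by
  classical
  rw [Fintype.card_congr (matchEquiv a b), Fintype.card_pi]
  by_cases h : cnt a = cnt b
  · rw [if_pos h]
    apply Finset.prod_congr rfl
    intro p _
    have hcard : Fintype.card {l : Fin T // a l = p} = Fintype.card {l : Fin T // b l = p} := by
      rw [cnt_card, cnt_card, h]
    rw [Fintype.card_equiv (Fintype.equivOfCardEq hcard), cnt_card]
  · rw [if_neg h]
    have : ∃ p, cnt a p ≠ cnt b p := by
      by_contra hc
      push_neg at hc
      exact h (funext hc)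
    obtain ⟨p₁, hp₁⟩ := this
    apply Finset.prod_eq_zero (Finset.mem_univ p₁)
    rw [Fintype.card_eq_zero_iff]
    constructor
    intro e
    exact hp₁ (by rw [← cnt_card, ← cnt_card]; exact Fintype.card_congr e)


lemma cnt_sum (a : Fin T → κ) : ∑ p, cnt a p = T := by
  have h := Finset.card_eq_sum_card_fiberwise
    (f := a) (s := (Finset.univ : Finset (Fin T))) (t := Finset.univ) (fun x _ => Finset.mem_univ _)
  have h2 : (Finset.univ : Finset (Fin T)).card = T := by simp
  rw [h2] at h
  exact h.symm

lemma cycleCount_inv (π : Equiv.Perm (Fin T)) : cycleCount π⁻¹ = cycleCount π := by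
  unfold cycleCount
  rw [Equiv.Perm.cycleType_inv]


end StmtAux5

namespace StmtAux
variable {ι : Type*} [Fintype ι] [DecidableEq ι]

lemma prod_count {T : ℕ} (v : ι → ℂ) (c : Fin T → ι) :
    ∏ l, v (c l) = ∏ p, v p ^ StmtAux5.cnt c p := by
  rw [Finset.prod_comp]
  apply Finset.prod_subset (Finset.subset_univ _)
  intro p _ hp
  have hc : (Finset.univ.filter (fun a => c a = p)).card = 0 := by
    rw [Finset.card_eq_zero, Finset.filter_eq_empty_iff]
    intro l _ hl
    exact hp (Finset.mem_image.2 ⟨l, Finset.mem_univ l, hl⟩)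
  rw [hc, pow_zero]

lemma prod_eq_phi {T : ℕ} (w : ι → ℂ) (a b : Fin T → ι) :
    ∏ l, w (a l) * (starRingEnd ℂ) (w (b l)) = phi (StmtAux5.cnt a) (StmtAux5.cnt b) w := by
  rw [Finset.prod_mul_distrib]
  have ha := prod_count w a
  have hb := prod_count (fun p => (starRingEnd ℂ) (w p)) b
  rw [ha, hb, phi, ← Finset.prod_mul_distrib]


end StmtAux

open StmtAux StmtAux5 in
/-- The `T`-th moment of a random induced state:
`∫ ψ_U^{⊗T} dμ(U) = (∏_{i=0}^{T−1}(ds+i))⁻¹ Σ_{π ∈ S_T} s^{c(π)} P_π`, entrywise, where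
`ψ_U` is the partial trace over the `s`-dimensional factor of the projector onto the
Haar-random pure state `Ue₀` in dimension `d·s`.  The Haar probability measure is encoded
as an arbitrary left-invariant Borel probability measure `μ` on the unitary group. -/
theorem stmt_18 (d s T : ℕ) (hd : 0 < d) (hs : 0 < s) (hT : 0 < T)
    (μ : Measure (Matrix.unitaryGroup (Fin d × Fin s) ℂ))
    [IsProbabilityMeasure μ] [μ.IsMulLeftInvariant]
    (e₀ : Fin d × Fin s → ℂ)
    (he₀ : e₀ = fun p => if p = (⟨0, hd⟩, ⟨0, hs⟩) then 1 else 0)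
    (ψ : Matrix.unitaryGroup (Fin d × Fin s) ℂ → Matrix (Fin d) (Fin d) ℂ)
    (hψ : ∀ U i j, ψ U i j =
      ∑ k : Fin s,
        ((U : Matrix (Fin d × Fin s) (Fin d × Fin s) ℂ).mulVec e₀ (i, k)) *
          (starRingEnd ℂ) ((U : Matrix (Fin d × Fin s) (Fin d × Fin s) ℂ).mulVec e₀ (j, k))) :
    ∀ f g : Fin T → Fin d,
      ∫ U, (∏ l : Fin T, ψ U (f l) (g l)) ∂μ
        = (∏ i ∈ Finset.range T, ((d : ℂ) * s + i))⁻¹ *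
            ∑ π : Equiv.Perm (Fin T), (s : ℂ) ^ cycleCount π * permOp d T π f g := by
  intro f g
  classical
  set p₀ : Fin d × Fin s := (⟨0, hd⟩, ⟨0, hs⟩) with hp₀
  have hvv : ∀ (U : Matrix.unitaryGroup (Fin d × Fin s) ℂ) (r : Fin d × Fin s),
      (U : Matrix (Fin d × Fin s) (Fin d × Fin s) ℂ).mulVec e₀ r = colV p₀ U r := by
    intro U r
    rw [he₀, Matrix.mulVec, dotProduct, Finset.sum_eq_single p₀]
    · simp [colV]
    · intro w _ hw
      simp [hw]
    · simp
  set NC : ℂ := ∏ i ∈ Finset.range T, ((d : ℂ) * s + i) with hNC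
  have hcard : Fintype.card (Fin d × Fin s) = d * s := by simp
  have hNCcard : ∀ S : ℕ, S = T →
      NC = ∏ i ∈ Finset.range S, ((Fintype.card (Fin d × Fin s) : ℂ) + (i : ℂ)) := by
    intro S hS
    subst hS
    rw [hNC]
    apply Finset.prod_congr rfl
    intro i _
    rw [hcard]
    push_cast
    ring
  have hNC0 : NC ≠ 0 := by
    rw [hNC]
    apply Finset.prod_ne_zero_iff.2
    intro i _
    have h1 : ((d * s + i : ℕ) : ℂ) ≠ 0 := by
      apply Nat.cast_ne_zero.2
      have := Nat.mul_pos hd hs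
      omega
    have h2 : ((d * s + i : ℕ) : ℂ) = (d : ℂ) * s + i := by push_cast; ring
    rw [h2] at h1
    exact h1
  -- expand the integrand
  have hexpand : ∀ U : Matrix.unitaryGroup (Fin d × Fin s) ℂ,
      (∏ l : Fin T, ψ U (f l) (g l))
        = ∑ K : Fin T → Fin s,
            phi (cnt (fun l => (f l, K l))) (cnt (fun l => (g l, K l))) (colV p₀ U) := by
    intro U
    have h1 : (∏ l : Fin T, ψ U (f l) (g l))
        = ∏ l : Fin T, ∑ k : Fin s, colV p₀ U (f l, k) * (starRingEnd ℂ) (colV p₀ U (g l, k)) := by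
      apply Finset.prod_congr rfl
      intro l _
      rw [hψ]
      apply Finset.sum_congr rfl
      intro k _
      rw [hvv, hvv]
    rw [h1, Finset.prod_univ_sum]
    rw [Fintype.piFinset_univ]
    apply Finset.sum_congr rfl
    intro K _
    exact prod_eq_phi (colV p₀ U) (fun l => (f l, K l)) (fun l => (g l, K l))
  have hint : ∫ U, (∏ l : Fin T, ψ U (f l) (g l)) ∂μ
      = ∑ K : Fin T → Fin s,
          PM μ p₀ (cnt (fun l => (f l, K l))) (cnt (fun l => (g l, K l))) := by
    rw [integral_congr_ae (Filter.Eventually.of_forall hexpand)]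
    exact integral_finset_sum _ (fun K _ => integrable_phi μ p₀ _ _)
  -- evaluate each moment
  have hval : ∀ K : Fin T → Fin s,
      NC * PM μ p₀ (cnt (fun l => (f l, K l))) (cnt (fun l => (g l, K l)))
        = ((Fintype.card {π : Equiv.Perm (Fin T) //
            (fun l => (g l, K l)) ∘ π = (fun l => (f l, K l))} : ℕ) : ℂ) := by
    intro K
    set a : Fin T → Fin d × Fin s := fun l => (f l, K l) with hadef
    set b : Fin T → Fin d × Fin s := fun l => (g l, K l) with hbdef
    rw [card_match a b]
    by_cases hcnt : cnt a = cnt b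
    · rw [if_pos hcnt, hcnt]
      have hform := PM_formula μ p₀ (cnt b)
      rw [← hNCcard _ (cnt_sum b)] at hform
      rw [mul_comm, hform, Nat.cast_prod]
    · rw [if_neg hcnt, phase μ p₀ _ _ hcnt, mul_zero, Nat.cast_zero]
  -- count the permutations
  have hcount : ∀ K : Fin T → Fin s,
      ((Fintype.card {π : Equiv.Perm (Fin T) //
          (fun l => (g l, K l)) ∘ π = (fun l => (f l, K l))} : ℕ) : ℂ)
        = ∑ π : Equiv.Perm (Fin T),
            (if (fun l => (g l, K l)) ∘ π = (fun l => (f l, K l)) then (1:ℂ) else 0) := by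
    intro K
    rw [Fintype.card_subtype, Finset.sum_boole]
  have hsplit : ∀ (π : Equiv.Perm (Fin T)) (K : Fin T → Fin s),
      ((fun l => (g l, K l)) ∘ π = (fun l => (f l, K l))) ↔ (g ∘ π = f ∧ K ∘ π = K) := by
    intro π K
    constructor
    · intro h
      constructor <;> funext l <;>
        · have hl := congrFun h l
          simp only [Function.comp_apply, Prod.mk.injEq] at hl
          first
            | exact hl.1
            | exact hl.2
    · rintro ⟨h1, h2⟩
      funext l
      simp only [Function.comp_apply, Prod.mk.injEq]
      exact ⟨congrFun h1 l, congrFun h2 l⟩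
  have hKsum : ∀ π : Equiv.Perm (Fin T),
      (∑ K : Fin T → Fin s, if (fun l => (g l, K l)) ∘ π = (fun l => (f l, K l)) then (1:ℂ) else 0)
        = if g ∘ π = f then ((s : ℂ) ^ cycleCount π) else 0 := by
    intro π
    by_cases hgf : g ∘ π = f
    · rw [if_pos hgf]
      have h1 : ∀ K : Fin T → Fin s,
          (if (fun l => (g l, K l)) ∘ π = (fun l => (f l, K l)) then (1:ℂ) else 0)
            = (if K ∘ π = K then (1:ℂ) else 0) := by
        intro K
        congr 1
        rw [eq_iff_iff, hsplit]
        simp [hgf]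
      rw [Finset.sum_congr rfl (fun K _ => h1 K), Finset.sum_boole, ← Fintype.card_subtype,
        count_invariant_fns]
      push_cast
      ring
    · rw [if_neg hgf]
      apply Finset.sum_eq_zero
      intro K _
      rw [if_neg]
      rw [hsplit]
      exact fun hc => hgf hc.1
  -- put it together
  have key : NC * (∫ U, (∏ l : Fin T, ψ U (f l) (g l)) ∂μ)
      = ∑ π : Equiv.Perm (Fin T), (s : ℂ) ^ cycleCount π * permOp d T π f g := by
    rw [hint, Finset.mul_sum]
    rw [Finset.sum_congr rfl (fun K _ => (hval K).trans (hcount K))]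
    rw [Finset.sum_comm]
    rw [Finset.sum_congr rfl (fun π _ => hKsum π)]
    apply Fintype.sum_equiv (Equiv.inv (Equiv.Perm (Fin T)))
    intro π
    simp only [Equiv.inv_apply]
    rw [permOp, cycleCount_inv]
    by_cases hc : g ∘ π = f
    · rw [if_pos hc, if_pos, mul_one]
      rw [← hc]
      funext l
      simp
    · rw [if_neg hc, if_neg, mul_zero]
      intro hcon
      apply hc
      rw [hcon]
      funext l
      simp
  rw [← key, inv_mul_cancel_left₀ hNC0]
end
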